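/- Contraction and cocontraction: for every formula A of DT, every connective α ∈ {∨}∪𝒜 and every connective β ∈ {∧}∪𝒜, there exist cut-free and identity-free derivations in DTsa from (A α A) to A and from A to (A β A). Moreover there is a constant c independent of A such that these derivations can be chosen with width at most c·n and height at most c·n (hence size at most c·n²), where n is the size of A. -/
import Mathlib


namespace SubatomicDT

/-- Formulae of the subatomic language DT: units, disjunction, conjunction,
and atoms (drawn from the countable set ℕ) used as binary connectives. -/
inductive Fm where
  | zero : Fm
  | one : Fm
  | or : Fm → Fm → Fm
  | and : Fm → Fm → Fm
  | atom : ℕ → Fm → Fm → Fm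
deriving DecidableEq

/-- Connectives: ∨, ∧ and the atoms. -/
inductive Conn where
  | or : Conn
  | and : Conn
  | atom : ℕ → Conn
deriving DecidableEq

/-- Apply a connective to two formulae. -/
def Conn.app : Conn → Fm → Fm → Fm
  | .or, A, B => .or A B
  | .and, A, B => .and A B
  | .atom a, A, B => .atom a A B

/-- The "strong" version α̂ of a connective: ∨̂ = ∧̂ = ∧ and â = a. -/
def Conn.up : Conn → Conn
  | .or => .and
  | .and => .and
  | .atom a => .atom a

/-- The "weak" version α̌ of a connective: ∨̌ = ∧̌ = ∨ and ǎ = a. -/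
def Conn.down : Conn → Conn
  | .or => .or
  | .and => .or
  | .atom a => .atom a

/-- A connective is an atom. -/
def Conn.IsAtom : Conn → Prop
  | .atom _ => True
  | _ => False

/-- The equational theory `=` on formulae: the smallest equivalence, closed
under contexts, generated by A∨0 = A, A∧1 = A, 0∧0 = 0, 1∨1 = 1,
0 a 0 = 0 and 1 a 1 = 1 for every atom a. -/
inductive FEq : Fm → Fm → Prop
  | orZero (A) : FEq (.or A .zero) A
  | andOne (A) : FEq (.and A .one) A
  | zeroAndZero : FEq (.and .zero .zero) .zero
  | oneOrOne : FEq (.or .one .one) .one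
  | atomZero (a) : FEq (.atom a .zero .zero) .zero
  | atomOne (a) : FEq (.atom a .one .one) .one
  | refl (A) : FEq A A
  | symm {A B} : FEq A B → FEq B A
  | trans {A B C} : FEq A B → FEq B C → FEq A C
  | orCongr {A B C D} : FEq A B → FEq C D → FEq (.or A C) (.or B D)
  | andCongr {A B C D} : FEq A B → FEq C D → FEq (.and A C) (.and B D)
  | atomCongr (a : ℕ) {A B C D} : FEq A B → FEq C D → FEq (.atom a A C) (.atom a B D)

/-- The rules of system DTsa: all instances of the two subatomic rule shapes
(A β B) α (C β̂ D) ⟶ (A α C) β (B α D) and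
(A β B) α (C β D) ⟶ (A α C) β (B α̌ D), plus the equality rules. -/
inductive DTRule : Fm → Fm → Prop
  | up (α β : Conn) (A B C D : Fm) :
      DTRule (α.app (β.app A B) (β.up.app C D)) (β.app (α.app A C) (α.app B D))
  | down (α β : Conn) (A B C D : Fm) :
      DTRule (α.app (β.app A B) (β.app C D)) (β.app (α.app A C) (α.down.app B D))
  | eq {A B : Fm} : FEq A B → DTRule A B

/-- The rules of system SKSsa: DTsa without the rules whose instances have an
atom in both the α and the β position of the subatomic shape. -/
inductive SKSRule : Fm → Fm → Prop
  | up (α β : Conn) (A B C D : Fm) (h : ¬(α.IsAtom ∧ β.IsAtom)) :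
      SKSRule (α.app (β.app A B) (β.up.app C D)) (β.app (α.app A C) (α.app B D))
  | down (α β : Conn) (A B C D : Fm) (h : ¬(α.IsAtom ∧ β.IsAtom)) :
      SKSRule (α.app (β.app A B) (β.app C D)) (β.app (α.app A C) (α.down.app B D))
  | eq {A B : Fm} : FEq A B → SKSRule A B

/-- Open-deduction derivations over a set of rules `R`: a formula is a
derivation, derivations compose vertically through a rule instance, and
derivations compose horizontally by any connective. -/
inductive Deriv (R : Fm → Fm → Prop) : Fm → Fm → Type
  | form (A : Fm) : Deriv R A A
  | vcomp {A B C D : Fm} (φ : Deriv R A B) (r : R B C) (ψ : Deriv R C D) : Deriv R A D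
  | hcomp {A B C D : Fm} (α : Conn) (φ : Deriv R A B) (ψ : Deriv R C D) :
      Deriv R (α.app A C) (α.app B D)

/-- Size of a formula: the number of occurrences of units in it. -/
def Fm.size : Fm → ℕ
  | .zero => 1
  | .one => 1
  | .or A B => A.size + B.size
  | .and A B => A.size + B.size
  | .atom _ A B => A.size + B.size

/-- Negation of a formula. -/
def Fm.neg : Fm → Fm
  | .zero => .one
  | .one => .zero
  | .or A B => .and A.neg B.neg
  | .and A B => .or A.neg B.neg
  | .atom a A B => .atom a A.neg B.neg

/-- The inference step with premiss `P` and conclusion `Q` is a cut on atom `a`: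
an instance (A a B) ∧ (C a D) ⟶ (A ∧ C) a (B ∧ D) with A = D = 0 and B = C = 1,
or A = D = 1 and B = C = 0, in the equational theory. -/
def IsCut (a : ℕ) (P Q : Fm) : Prop :=
  ∃ A B C D : Fm,
    P = .and (.atom a A B) (.atom a C D) ∧
    Q = .atom a (.and A C) (.and B D) ∧
    ((FEq A .zero ∧ FEq D .zero ∧ FEq B .one ∧ FEq C .one) ∨
     (FEq A .one ∧ FEq D .one ∧ FEq B .zero ∧ FEq C .zero))

/-- An identity on `a` is the dual of a cut on `a`. -/
def IsIdentity (a : ℕ) (P Q : Fm) : Prop := IsCut a Q.neg P.neg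

/-- A derivation is cut-free: it contains no cut on any atom. -/
def Deriv.cutFree {R : Fm → Fm → Prop} : {A B : Fm} → Deriv R A B → Prop
  | _, _, .form _ => True
  | _, _, @Deriv.vcomp _ _ P Q _ φ _ ψ => φ.cutFree ∧ ψ.cutFree ∧ ∀ a, ¬ IsCut a P Q
  | _, _, .hcomp _ φ ψ => φ.cutFree ∧ ψ.cutFree

/-- A derivation is identity-free: it contains no identity on any atom. -/
def Deriv.idFree {R : Fm → Fm → Prop} : {A B : Fm} → Deriv R A B → Prop
  | _, _, .form _ => True
  | _, _, @Deriv.vcomp _ _ P Q _ φ _ ψ => φ.idFree ∧ ψ.idFree ∧ ∀ a, ¬ IsIdentity a P Q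
  | _, _, .hcomp _ φ ψ => φ.idFree ∧ ψ.idFree

/-- A derivation contains no cut on the given atom `a`. -/
def Deriv.cutFreeOn {R : Fm → Fm → Prop} (a : ℕ) : {A B : Fm} → Deriv R A B → Prop
  | _, _, .form _ => True
  | _, _, @Deriv.vcomp _ _ P Q _ φ _ ψ => φ.cutFreeOn a ∧ ψ.cutFreeOn a ∧ ¬ IsCut a P Q
  | _, _, .hcomp _ φ ψ => φ.cutFreeOn a ∧ ψ.cutFreeOn a

/-- Width of a derivation. -/
def Deriv.width {R : Fm → Fm → Prop} : {A B : Fm} → Deriv R A B → ℕ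
  | _, _, .form A => A.size
  | _, _, .vcomp φ _ ψ => max φ.width ψ.width
  | _, _, .hcomp _ φ ψ => φ.width + ψ.width

/-- Height of a derivation. -/
def Deriv.height {R : Fm → Fm → Prop} : {A B : Fm} → Deriv R A B → ℕ
  | _, _, .form _ => 0
  | _, _, .vcomp φ _ ψ => φ.height + ψ.height + 1
  | _, _, .hcomp _ φ ψ => max φ.height ψ.height

/-- Size of a derivation: the number of occurrences of units in it. -/
def Deriv.size {R : Fm → Fm → Prop} : {A B : Fm} → Deriv R A B → ℕ
  | _, _, .form A => A.size
  | _, _, .vcomp φ _ ψ => φ.size + ψ.size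
  | _, _, .hcomp _ φ ψ => φ.size + ψ.size

/-- Semantic interpretation of formulae for an assignment `X : 𝒜 → {0,1}`. -/
def eval (X : ℕ → Bool) : Fm → Bool
  | .zero => false
  | .one => true
  | .or A B => eval X A || eval X B
  | .and A B => eval X A && eval X B
  | .atom a A B => if X a then eval X B else eval X A

/-- The atom `a` occurs in the formula. -/
def Fm.hasAtom (a : ℕ) : Fm → Prop
  | .zero => False
  | .one => False
  | .or A B => A.hasAtom a ∨ B.hasAtom a
  | .and A B => A.hasAtom a ∨ B.hasAtom a
  | .atom b A B => b = a ∨ A.hasAtom a ∨ B.hasAtom a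

/-- Some atom occurs in the formula. -/
def Fm.hasAnyAtom : Fm → Prop
  | .zero => False
  | .one => False
  | .or A B => A.hasAnyAtom ∨ B.hasAnyAtom
  | .and A B => A.hasAnyAtom ∨ B.hasAnyAtom
  | .atom _ _ _ => True

/-- The formula has a nested atom occurrence: an atom occurrence inside
an argument of an atom used as a connective. -/
def Fm.hasNested : Fm → Prop
  | .zero => False
  | .one => False
  | .or A B => A.hasNested ∨ B.hasNested
  | .and A B => A.hasNested ∨ B.hasNested
  | .atom _ A B => A.hasAnyAtom ∨ B.hasAnyAtom

/-- The formula has a nested occurrence of the particular atom `a`. -/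
def Fm.nestedOn (a : ℕ) : Fm → Prop
  | .zero => False
  | .one => False
  | .or A B => A.nestedOn a ∨ B.nestedOn a
  | .and A B => A.nestedOn a ∨ B.nestedOn a
  | .atom _ A B => A.hasAtom a ∨ B.hasAtom a

/-- A is a propositional formula: equal (in the equational theory) to a formula
with no nested atom occurrences. -/
def IsPropF (A : Fm) : Prop := ∃ B, FEq A B ∧ ¬ B.hasNested

/-- The formula contains no conjunction and no disjunction. -/
def Fm.noAndOr : Fm → Prop
  | .zero => True
  | .one => True
  | .or _ _ => False
  | .and _ _ => False
  | .atom _ A B => A.noAndOr ∧ B.noAndOr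

/-- A is a strict decision tree: equal (in the equational theory) to a formula
with no conjunctions or disjunctions. -/
def IsSDT (A : Fm) : Prop := ∃ B, FEq A B ∧ B.noAndOr

/-- Right projection on atom `a` of a formula. -/
def rproj (a : ℕ) : Fm → Fm
  | .zero => .zero
  | .one => .one
  | .or A B => .or (rproj a A) (rproj a B)
  | .and A B => .and (rproj a A) (rproj a B)
  | .atom b A B => if b = a then rproj a B else .atom b (rproj a A) (rproj a B)

/-- Left projection on atom `a` of a formula. -/
def lproj (a : ℕ) : Fm → Fm
  | .zero => .zero
  | .one => .one
  | .or A B => .or (lproj a A) (lproj a B)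
  | .and A B => .and (lproj a A) (lproj a B)
  | .atom b A B => if b = a then lproj a A else .atom b (lproj a A) (lproj a B)

/-- The atom `a` does not occur anywhere in the derivation. -/
def Deriv.noAtom {R : Fm → Fm → Prop} (a : ℕ) : {A B : Fm} → Deriv R A B → Prop
  | _, _, .form A => ¬ A.hasAtom a
  | _, _, .vcomp φ _ ψ => φ.noAtom a ∧ ψ.noAtom a
  | _, _, .hcomp _ φ ψ => φ.noAtom a ∧ ψ.noAtom a

/-- Single-hole contexts. -/
inductive Ctx where
  | hole : Ctx
  | orL : Ctx → Fm → Ctx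
  | orR : Fm → Ctx → Ctx
  | andL : Ctx → Fm → Ctx
  | andR : Fm → Ctx → Ctx
  | atomL : ℕ → Ctx → Fm → Ctx
  | atomR : ℕ → Fm → Ctx → Ctx

/-- Substitute a formula into the hole of a context. -/
def Ctx.fill : Ctx → Fm → Fm
  | .hole, A => A
  | .orL K B, A => .or (K.fill A) B
  | .orR B K, A => .or B (K.fill A)
  | .andL K B, A => .and (K.fill A) B
  | .andR B K, A => .and B (K.fill A)
  | .atomL a K B, A => .atom a (K.fill A) B
  | .atomR a B K, A => .atom a B (K.fill A)

/-- Size of a context: the number of unit occurrences in it. -/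
def Ctx.size : Ctx → ℕ
  | .hole => 0
  | .orL K B => K.size + B.size
  | .orR B K => B.size + K.size
  | .andL K B => K.size + B.size
  | .andR B K => B.size + K.size
  | .atomL _ K B => K.size + B.size
  | .atomR _ B K => B.size + K.size


/-! ### Auxiliary material for the contraction theorem -/

lemma eval_feq {A B : Fm} (h : FEq A B) (X : ℕ → Bool) : eval X A = eval X B := by
  induction h with
  | orZero A => simp [eval]
  | andOne A => simp [eval]
  | zeroAndZero => simp [eval]
  | oneOrOne => simp [eval]
  | atomZero a => simp [eval]
  | atomOne a => simp [eval]
  | refl A => rfl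
  | symm _ ih => exact ih.symm
  | trans _ _ ih1 ih2 => exact ih1.trans ih2
  | orCongr _ _ ih1 ih2 => simp [eval, ih1, ih2]
  | andCongr _ _ ih1 ih2 => simp [eval, ih1, ih2]
  | atomCongr a _ _ ih1 ih2 => simp [eval, ih1, ih2]

lemma feq01 {X : Fm} (h0 : FEq X .zero) (h1 : FEq X .one) : False := by
  have := eval_feq (h0.symm.trans h1) (fun _ => false)
  simp [eval] at this

lemma feq0 (α : Conn) : FEq (α.app .zero .zero) .zero := by
  cases α with
  | or => exact FEq.orZero _
  | and => exact FEq.zeroAndZero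
  | atom a => exact FEq.atomZero a

lemma feq1 (α : Conn) : FEq (α.app .one .one) .one := by
  cases α with
  | or => exact FEq.oneOrOne
  | and => exact FEq.andOne _
  | atom a => exact FEq.atomOne a

lemma down_rule' (α γ : Conn) (h : α.down = α) (B C : Fm) :
    DTRule (α.app (γ.app B C) (γ.app B C)) (γ.app (α.app B B) (α.app C C)) := by
  have := DTRule.down α γ B C B C
  rwa [h] at this

lemma up_rule' (β γ : Conn) (h : β.up = β) (B C : Fm) :
    DTRule (γ.app (β.app B B) (β.app C C)) (β.app (γ.app B C) (γ.app B C)) := by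
  have := DTRule.up γ β B B C C
  rwa [h] at this

/-- Contraction derivation, defined by recursion on the formula. -/
def contr (α : Conn) (h : α.down = α) : (A : Fm) → Deriv DTRule (α.app A A) A
  | .zero => .vcomp (.form _) (.eq (feq0 α)) (.form _)
  | .one => .vcomp (.form _) (.eq (feq1 α)) (.form _)
  | .or B C => .vcomp (.form _) (down_rule' α .or h B C)
      (.hcomp .or (contr α h B) (contr α h C))
  | .and B C => .vcomp (.form _) (down_rule' α .and h B C)
      (.hcomp .and (contr α h B) (contr α h C))
  | .atom b B C => .vcomp (.form _) (down_rule' α (.atom b) h B C)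
      (.hcomp (.atom b) (contr α h B) (contr α h C))

/-- Cocontraction derivation. -/
def cocontr (β : Conn) (h : β.up = β) : (A : Fm) → Deriv DTRule A (β.app A A)
  | .zero => .vcomp (.form _) (.eq (feq0 β).symm) (.form _)
  | .one => .vcomp (.form _) (.eq (feq1 β).symm) (.form _)
  | .or B C => .vcomp (.hcomp .or (cocontr β h B) (cocontr β h C))
      (up_rule' β .or h B C) (.form _)
  | .and B C => .vcomp (.hcomp .and (cocontr β h B) (cocontr β h C))
      (up_rule' β .and h B C) (.form _)
  | .atom b B C => .vcomp (.hcomp (.atom b) (cocontr β h B) (cocontr β h C))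
      (up_rule' β (.atom b) h B C) (.form _)

lemma not_cut_app_down (α : Conn) (h : α.down = α) (X Y : Fm) (a : ℕ) (Q : Fm) :
    ¬ IsCut a (α.app X Y) Q := by
  rintro ⟨A', B', C', D', h1, -, -⟩
  cases α with
  | or => exact Fm.noConfusion h1
  | and => exact Conn.noConfusion h
  | atom b => exact Fm.noConfusion h1

lemma not_cut_concl_unit {a : ℕ} {P Q : Fm} (h : Q = Fm.zero ∨ Q = Fm.one) :
    ¬ IsCut a P Q := by
  rintro ⟨A', B', C', D', -, h2, -⟩
  rcases h with rfl | rfl <;> exact Fm.noConfusion h2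

lemma not_id_app_up (β : Conn) (h : β.up = β) (X Y : Fm) (a : ℕ) (P : Fm) :
    ¬ IsIdentity a P (β.app X Y) := by
  rintro ⟨A', B', C', D', h1, -, -⟩
  cases β with
  | or => exact Conn.noConfusion h
  | and => exact Fm.noConfusion h1
  | atom b => exact Fm.noConfusion h1

lemma not_id_prem_unit {a : ℕ} {P Q : Fm} (h : Q = Fm.zero ∨ Q = Fm.one) :
    ¬ IsIdentity a P Q := by
  rintro ⟨A', B', C', D', h1, -, -⟩
  rcases h with rfl | rfl <;> exact Fm.noConfusion h1

/-- The key non-identity fact for the contraction step. -/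
lemma not_id_contr_step (α γ : Conn) (h : α.down = α) (B C : Fm) (a : ℕ) (P : Fm) :
    ¬ IsIdentity a P (γ.app (α.app B B) (α.app C C)) := by
  rintro ⟨A', B', C', D', h1, -, h3⟩
  cases γ with
  | and => exact Fm.noConfusion h1
  | atom c => exact Fm.noConfusion h1
  | or =>
    cases α with
    | or => injection h1 with e1 e2; exact Fm.noConfusion e1
    | and => exact Conn.noConfusion h
    | atom b =>
      injection h1 with e1 e2
      injection e1 with eb eA eB
      injection e2 with ec eC eD
      subst eA; subst eB
      rcases h3 with ⟨hA, -, hB, -⟩ | ⟨hA, -, hB, -⟩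
      · exact feq01 hA hB
      · exact feq01 hB hA

/-- The key non-cut fact for the cocontraction step. -/
lemma not_cut_cocontr_step (β γ : Conn) (h : β.up = β) (B C : Fm) (a : ℕ) (Q : Fm) :
    ¬ IsCut a (γ.app (β.app B B) (β.app C C)) Q := by
  rintro ⟨A', B', C', D', h1, -, h3⟩
  cases γ with
  | or => exact Fm.noConfusion h1
  | atom c => exact Fm.noConfusion h1
  | and =>
    cases β with
    | or => injection h1 with e1 e2; exact Fm.noConfusion e1
    | and => injection h1 with e1 e2; exact Fm.noConfusion e1
    | atom b =>
      injection h1 with e1 e2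
      injection e1 with eb eA eB
      subst eA; subst eB
      rcases h3 with ⟨hA, -, hB, -⟩ | ⟨hA, -, hB, -⟩
      · exact feq01 hA hB
      · exact feq01 hB hA

lemma contr_cutFree (α : Conn) (h : α.down = α) : ∀ A, (contr α h A).cutFree := by
  intro A
  induction A with
  | zero => exact ⟨trivial, trivial, fun a => not_cut_concl_unit (Or.inl rfl)⟩
  | one => exact ⟨trivial, trivial, fun a => not_cut_concl_unit (Or.inr rfl)⟩
  | or B C ihB ihC => exact ⟨trivial, ⟨ihB, ihC⟩, fun a => not_cut_app_down α h _ _ a _⟩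
  | and B C ihB ihC => exact ⟨trivial, ⟨ihB, ihC⟩, fun a => not_cut_app_down α h _ _ a _⟩
  | atom b B C ihB ihC => exact ⟨trivial, ⟨ihB, ihC⟩, fun a => not_cut_app_down α h _ _ a _⟩

lemma contr_idFree (α : Conn) (h : α.down = α) : ∀ A, (contr α h A).idFree := by
  intro A
  induction A with
  | zero => exact ⟨trivial, trivial, fun a => not_id_prem_unit (Or.inl rfl)⟩
  | one => exact ⟨trivial, trivial, fun a => not_id_prem_unit (Or.inr rfl)⟩
  | or B C ihB ihC => exact ⟨trivial, ⟨ihB, ihC⟩, fun a => not_id_contr_step α _ h B C a _⟩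
  | and B C ihB ihC => exact ⟨trivial, ⟨ihB, ihC⟩, fun a => not_id_contr_step α _ h B C a _⟩
  | atom b B C ihB ihC => exact ⟨trivial, ⟨ihB, ihC⟩, fun a => not_id_contr_step α _ h B C a _⟩

lemma cocontr_cutFree (β : Conn) (h : β.up = β) : ∀ A, (cocontr β h A).cutFree := by
  intro A
  induction A with
  | zero =>
    refine ⟨trivial, trivial, fun a => ?_⟩
    rintro ⟨A', B', C', D', h1, -, -⟩; exact Fm.noConfusion h1
  | one =>
    refine ⟨trivial, trivial, fun a => ?_⟩
    rintro ⟨A', B', C', D', h1, -, -⟩; exact Fm.noConfusion h1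
  | or B C ihB ihC => exact ⟨⟨ihB, ihC⟩, trivial, fun a => not_cut_cocontr_step β _ h B C a _⟩
  | and B C ihB ihC => exact ⟨⟨ihB, ihC⟩, trivial, fun a => not_cut_cocontr_step β _ h B C a _⟩
  | atom b B C ihB ihC => exact ⟨⟨ihB, ihC⟩, trivial, fun a => not_cut_cocontr_step β _ h B C a _⟩

lemma cocontr_idFree (β : Conn) (h : β.up = β) : ∀ A, (cocontr β h A).idFree := by
  intro A
  induction A with
  | zero => exact ⟨trivial, trivial, fun a => not_id_app_up β h _ _ a _⟩
  | one => exact ⟨trivial, trivial, fun a => not_id_app_up β h _ _ a _⟩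
  | or B C ihB ihC => exact ⟨⟨ihB, ihC⟩, trivial, fun a => not_id_app_up β h _ _ a _⟩
  | and B C ihB ihC => exact ⟨⟨ihB, ihC⟩, trivial, fun a => not_id_app_up β h _ _ a _⟩
  | atom b B C ihB ihC => exact ⟨⟨ihB, ihC⟩, trivial, fun a => not_id_app_up β h _ _ a _⟩

lemma size_app (α : Conn) (A B : Fm) : (α.app A B).size = A.size + B.size := by
  cases α <;> rfl

lemma size_pos (A : Fm) : 1 ≤ A.size := by
  induction A <;> simp [Fm.size] <;> omega

lemma contr_width (α : Conn) (h : α.down = α) : ∀ A, (contr α h A).width ≤ 2 * A.size := by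
  intro A
  induction A with
  | zero => simp [contr, Deriv.width, size_app, Fm.size]
  | one => simp [contr, Deriv.width, size_app, Fm.size]
  | or B C ihB ihC =>
    simp only [contr, Deriv.width, size_app, Fm.size] at *
    omega
  | and B C ihB ihC =>
    simp only [contr, Deriv.width, size_app, Fm.size] at *
    omega
  | atom b B C ihB ihC =>
    simp only [contr, Deriv.width, size_app, Fm.size] at *
    omega

lemma contr_height (α : Conn) (h : α.down = α) : ∀ A, (contr α h A).height ≤ A.size := by
  intro A
  induction A with
  | zero => simp [contr, Deriv.height, Fm.size]
  | one => simp [contr, Deriv.height, Fm.size]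
  | or B C ihB ihC =>
    have := size_pos B; have := size_pos C
    simp only [contr, Deriv.height, Fm.size] at *
    omega
  | and B C ihB ihC =>
    have := size_pos B; have := size_pos C
    simp only [contr, Deriv.height, Fm.size] at *
    omega
  | atom b B C ihB ihC =>
    have := size_pos B; have := size_pos C
    simp only [contr, Deriv.height, Fm.size] at *
    omega

lemma cocontr_width (β : Conn) (h : β.up = β) : ∀ A, (cocontr β h A).width ≤ 2 * A.size := by
  intro A
  induction A with
  | zero => simp [cocontr, Deriv.width, size_app, Fm.size]
  | one => simp [cocontr, Deriv.width, size_app, Fm.size]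
  | or B C ihB ihC =>
    simp only [cocontr, Deriv.width, size_app, Fm.size] at *
    omega
  | and B C ihB ihC =>
    simp only [cocontr, Deriv.width, size_app, Fm.size] at *
    omega
  | atom b B C ihB ihC =>
    simp only [cocontr, Deriv.width, size_app, Fm.size] at *
    omega

lemma cocontr_height (β : Conn) (h : β.up = β) : ∀ A, (cocontr β h A).height ≤ A.size := by
  intro A
  induction A with
  | zero => simp [cocontr, Deriv.height, Fm.size]
  | one => simp [cocontr, Deriv.height, Fm.size]
  | or B C ihB ihC =>
    have := size_pos B; have := size_pos C
    simp only [cocontr, Deriv.height, Fm.size] at *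
    omega
  | and B C ihB ihC =>
    have := size_pos B; have := size_pos C
    simp only [cocontr, Deriv.height, Fm.size] at *
    omega
  | atom b B C ihB ihC =>
    have := size_pos B; have := size_pos C
    simp only [cocontr, Deriv.height, Fm.size] at *
    omega


/-- Contraction and cocontraction: for every formula A, every
α ∈ {∨} ∪ 𝒜 and every β ∈ {∧} ∪ 𝒜 there are cut-free and identity-free
derivations from (A α A) to A and from A to (A β A), of width and height O(n)
where n is the size of A. -/
theorem dtsa_contraction :
    ∃ c : ℕ, ∀ (A : Fm) (α β : Conn),
      (α = Conn.or ∨ α.IsAtom) → (β = Conn.and ∨ β.IsAtom) →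
      ∃ (φ : Deriv DTRule (α.app A A) A) (ψ : Deriv DTRule A (β.app A A)),
        φ.cutFree ∧ φ.idFree ∧ ψ.cutFree ∧ ψ.idFree ∧
        φ.width ≤ c * A.size ∧ φ.height ≤ c * A.size ∧
        ψ.width ≤ c * A.size ∧ ψ.height ≤ c * A.size := by
  refine ⟨2, fun A α β hα hβ => ?_⟩
  have hα' : α.down = α := by
    rcases hα with rfl | h
    · rfl
    · cases α with
      | or => rfl
      | and => exact h.elim
      | atom a => rfl
  have hβ' : β.up = β := by
    rcases hβ with rfl | h
    · rfl
    · cases β with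
      | or => exact h.elim
      | and => rfl
      | atom a => rfl
  refine ⟨contr α hα' A, cocontr β hβ' A, contr_cutFree α hα' A, contr_idFree α hα' A,
    cocontr_cutFree β hβ' A, cocontr_idFree β hβ' A, contr_width α hα' A,
    le_trans (contr_height α hα' A) (by omega), cocontr_width β hβ' A,
    le_trans (cocontr_height β hβ' A) (by omega)⟩

end SubatomicDT
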